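/- Let M be a symmetric positive definite 4×4 real matrix and let B be the 4×4 matrix with rows (0,0,0,−2), (0,1,0,0), (0,0,1,0), (−2,0,0,0). Then the quartic polynomial Q(η) = det(M − ηB) has four real roots counted with multiplicity, of which exactly three are positive and one is negative. -/

import Mathlib

open Matrix

/-- The matrix of the Pratt constraint `B² + C² - 4AD = 1`. -/
def prattB : Matrix (Fin 4) (Fin 4) ℝ :=
  !![0, 0, 0, -2; 0, 1, 0, 0; 0, 0, 1, 0; -2, 0, 0, 0]

lemma prattB_herm : prattB.IsHermitian := by
  ext i j
  fin_cases i <;> fin_cases j <;>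
    simp [prattB, Matrix.conjTranspose_apply, Matrix.vecHead, Matrix.vecTail]

lemma prattB_det : prattB.det = -4 := by
  norm_num [prattB, Matrix.det_succ_row_zero, Fin.sum_univ_succ, Fin.castSucc, Fin.castAdd,
    Fin.castLE]
  simp [Matrix.cons_val]
  norm_num

lemma prattB_mulVec (u : Fin 4 → ℝ) :
    prattB *ᵥ u = ![(-2)*u 3, u 1, u 2, (-2)*u 0] := by
  funext k
  fin_cases k <;>
    simp [prattB, Matrix.mulVec, dotProduct, Fin.sum_univ_four, Matrix.vecHead, Matrix.vecTail]

lemma dot_sandwich (A C : Matrix (Fin 4) (Fin 4) ℝ) (hA : Aᵀ = A) (x : Fin 4 → ℝ) :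
    (A *ᵥ x) ⬝ᵥ (C *ᵥ (A *ᵥ x)) = x ⬝ᵥ ((A * C * A) *ᵥ x) := by
  have h1 : A *ᵥ x = x ᵥ* A := by rw [← hA, mulVec_transpose, hA]
  rw [h1, dotProduct_mulVec, vecMul_vecMul, ← dotProduct_mulVec, ← h1, mulVec_mulVec]

lemma factor_id (m η : ℝ) (hm : m ≠ 0) : 1 - η * m = -m * (η - m⁻¹) := by
  field_simp; ring

lemma quartic_package (μ : Fin 4 → ℝ) (d : ℝ) (hd : d ≠ 0) (i₀ : Fin 4)
    (hneg : μ i₀ < 0) (hpos : ∀ j, j ≠ i₀ → 0 < μ j) :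
    ∃ (c η₁ η₂ η₃ η₄ : ℝ), c ≠ 0 ∧ η₁ < 0 ∧ 0 < η₂ ∧ 0 < η₃ ∧ 0 < η₄ ∧
      ∀ η : ℝ, d * ∏ i, (1 - η * μ i)
        = c * (η - η₁) * (η - η₂) * (η - η₃) * (η - η₄) := by
  have hnz : ∀ i, μ i ≠ 0 := by
    intro i
    by_cases h : i = i₀
    · rw [h]; exact ne_of_lt hneg
    · exact ne_of_gt (hpos i h)
  have main : ∀ η : ℝ, d * ∏ i, (1 - η * μ i)
      = (d * (μ 0 * μ 1 * μ 2 * μ 3)) * (η - (μ 0)⁻¹) * (η - (μ 1)⁻¹)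
        * (η - (μ 2)⁻¹) * (η - (μ 3)⁻¹) := by
    intro η
    rw [Fin.prod_univ_four,
      factor_id _ _ (hnz 0), factor_id _ _ (hnz 1), factor_id _ _ (hnz 2),
      factor_id _ _ (hnz 3)]
    ring
  have hcne : d * (μ 0 * μ 1 * μ 2 * μ 3) ≠ 0 :=
    mul_ne_zero hd (mul_ne_zero (mul_ne_zero (mul_ne_zero (hnz 0) (hnz 1)) (hnz 2)) (hnz 3))
  fin_cases i₀
  · exact ⟨_, (μ 0)⁻¹, (μ 1)⁻¹, (μ 2)⁻¹, (μ 3)⁻¹, hcne, inv_lt_zero.mpr hneg,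
      inv_pos.mpr (hpos 1 (by decide)), inv_pos.mpr (hpos 2 (by decide)),
      inv_pos.mpr (hpos 3 (by decide)), main⟩
  · exact ⟨_, (μ 1)⁻¹, (μ 0)⁻¹, (μ 2)⁻¹, (μ 3)⁻¹, hcne, inv_lt_zero.mpr hneg,
      inv_pos.mpr (hpos 0 (by decide)), inv_pos.mpr (hpos 2 (by decide)),
      inv_pos.mpr (hpos 3 (by decide)), fun η => by rw [main η]; ring⟩
  · exact ⟨_, (μ 2)⁻¹, (μ 0)⁻¹, (μ 1)⁻¹, (μ 3)⁻¹, hcne, inv_lt_zero.mpr hneg,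
      inv_pos.mpr (hpos 0 (by decide)), inv_pos.mpr (hpos 1 (by decide)),
      inv_pos.mpr (hpos 3 (by decide)), fun η => by rw [main η]; ring⟩
  · exact ⟨_, (μ 3)⁻¹, (μ 0)⁻¹, (μ 1)⁻¹, (μ 2)⁻¹, hcne, inv_lt_zero.mpr hneg,
      inv_pos.mpr (hpos 0 (by decide)), inv_pos.mpr (hpos 1 (by decide)),
      inv_pos.mpr (hpos 2 (by decide)), fun η => by rw [main η]; ring⟩

lemma det_key (L S M B : Matrix (Fin 4) (Fin 4) ℝ) (hLL : L * L = M) (hLSL : L * S * L = B)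
    (hSsa : S.IsHermitian) (η : ℝ) :
    (M - η • B).det = (L.det * L.det) * ∏ i, (1 - η * hSsa.eigenvalues i) := by
  have hsplit : M - η • B = L * (1 - η • S) * L := by
    rw [mul_sub, sub_mul, mul_one, Matrix.mul_smul, Matrix.smul_mul, hLL, hLSL]
  rw [hsplit, det_mul, det_mul]
  have hU := hSsa.spectral_theorem
  set U : Matrix (Fin 4) (Fin 4) ℝ := (hSsa.eigenvectorUnitary : Matrix (Fin 4) (Fin 4) ℝ)
    with hUdef
  have hUU : U * star U = 1 :=
    (Matrix.mem_unitaryGroup_iff).mp hSsa.eigenvectorUnitary.2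
  have hdiag : (1 : Matrix (Fin 4) (Fin 4) ℝ) - η • S
      = U * (diagonal fun i => 1 - η * hSsa.eigenvalues i) * star U := by
    have h2 : (diagonal fun i : Fin 4 => 1 - η * hSsa.eigenvalues i)
        = 1 - η • diagonal (RCLike.ofReal ∘ hSsa.eigenvalues) := by
      rw [← diagonal_one, ← diagonal_smul, diagonal_sub]
      rfl
    rw [h2, mul_sub, sub_mul, mul_one, hUU, Matrix.mul_smul, Matrix.smul_mul]
    nth_rewrite 1 [hU]
    rw [Unitary.conjStarAlgAut_apply]
  rw [hdiag, det_mul, det_mul, det_diagonal]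
  have h3 : U.det * (star U).det = 1 := by rw [← det_mul, hUU, det_one]
  linear_combination L.det * L.det * (∏ i : Fin 4, (1 - η * hSsa.eigenvalues i)) * h3

lemma prod_eig_neg (L : Matrix (Fin 4) (Fin 4) ℝ) (hLdet : L.det ≠ 0)
    (S : Matrix (Fin 4) (Fin 4) ℝ) (hSdef : S = L⁻¹ * prattB * L⁻¹) (hSsa : S.IsHermitian) :
    ∏ i, hSsa.eigenvalues i < 0 := by
  have h1 : S.det = ∏ i, hSsa.eigenvalues i := by
    have := hSsa.det_eq_prod_eigenvalues
    simpa using this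
  have h2 : S.det = L.det⁻¹ * (-4) * L.det⁻¹ := by
    rw [hSdef, det_mul, det_mul, det_nonsing_inv, prattB_det, Ring.inverse_eq_inv']
  rw [← h1, h2]
  have h3 : 0 < L.det⁻¹ * L.det⁻¹ := mul_self_pos.mpr (inv_ne_zero hLdet)
  nlinarith

set_option maxHeartbeats 2000000 in
lemma at_most_one_nonpos (L S : Matrix (Fin 4) (Fin 4) ℝ) (hLdet : L.det ≠ 0)
    (hLsa : L.IsHermitian) (hSsa : S.IsHermitian) (hLSL : L * S * L = prattB)
    (i j : Fin 4) (hij : i ≠ j) (hi : hSsa.eigenvalues i ≤ 0) (hj : hSsa.eigenvalues j ≤ 0) :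
    False := by
  classical
  set μ := hSsa.eigenvalues with hμdef
  set b := hSsa.eigenvectorBasis with hbdef
  set v2 : Fin 2 → EuclideanSpace ℝ (Fin 4) := b ∘ ![i, j] with hv2def
  set wvec : Fin 3 → (Fin 4 → ℝ) := ![![0,1,0,0], ![0,0,1,0], ![1,0,0,-1]] with hwdef
  set v3 : Fin 3 → EuclideanSpace ℝ (Fin 4) :=
    fun t => (WithLp.equiv 2 (Fin 4 → ℝ)).symm (L *ᵥ wvec t) with hv3def
  have hLinj : Function.Injective L.mulVec :=
    mulVec_injective_iff_isUnit.mpr ((isUnit_iff_isUnit_det L).mpr (isUnit_iff_ne_zero.mpr hLdet))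
  have hu : ∀ g : Fin 3 → ℝ,
      (g 0 • wvec 0 + g 1 • wvec 1 + g 2 • wvec 2) = ![g 2, g 0, g 1, -(g 2)] := by
    intro g; funext k; fin_cases k <;> simp [hwdef] <;> ring
  have li2 : LinearIndependent ℝ v2 := by
    apply b.orthonormal.linearIndependent.comp
    intro s t hst
    fin_cases s <;> fin_cases t <;> simp_all
  have li3 : LinearIndependent ℝ v3 := by
    rw [Fintype.linearIndependent_iff]
    intro g hg
    have hg' : L *ᵥ (g 0 • wvec 0 + g 1 • wvec 1 + g 2 • wvec 2) = 0 := by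
      rw [mulVec_add, mulVec_add, mulVec_smul, mulVec_smul, mulVec_smul]
      funext k
      have := congrArg (fun (z : EuclideanSpace ℝ (Fin 4)) => z k) hg
      simpa [v3, Fin.sum_univ_three] using this
    have h0 : (g 0 • wvec 0 + g 1 • wvec 1 + g 2 • wvec 2) = 0 := by
      apply hLinj
      rw [hg', mulVec_zero]
    rw [hu g] at h0
    intro t
    fin_cases t <;>
      [ (have := congrFun h0 1); (have := congrFun h0 2); (have := congrFun h0 0) ] <;>
      simpa using this
  set P := Submodule.span ℝ (Set.range v2) with hPdef
  set W := Submodule.span ℝ (Set.range v3) with hWdef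
  have hP : Module.finrank ℝ P = 2 := by rw [finrank_span_eq_card li2]; simp
  have hW : Module.finrank ℝ W = 3 := by rw [finrank_span_eq_card li3]; simp
  have hsum := Submodule.finrank_sup_add_finrank_inf_eq P W
  have hle : Module.finrank ℝ ↥(P ⊔ W) ≤ 4 := by
    have := Submodule.finrank_le (P ⊔ W)
    simpa [finrank_euclideanSpace_fin] using this
  have hinf : 0 < Module.finrank ℝ ↥(P ⊓ W) := by omega
  obtain ⟨v, hv0⟩ := Module.finrank_pos_iff_exists_ne_zero.mp hinf
  have hvP : (v : EuclideanSpace ℝ (Fin 4)) ∈ P := v.2.1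
  have hvW : (v : EuclideanSpace ℝ (Fin 4)) ∈ W := v.2.2
  have hvne : (v : EuclideanSpace ℝ (Fin 4)) ≠ 0 := by
    simpa [Submodule.coe_eq_zero] using hv0
  obtain ⟨a, ha⟩ := (Submodule.mem_span_range_iff_exists_fun ℝ).mp hvP
  obtain ⟨g, hg⟩ := (Submodule.mem_span_range_iff_exists_fun ℝ).mp hvW
  rw [Fin.sum_univ_two] at ha
  rw [Fin.sum_univ_three] at hg
  set x : Fin 4 → ℝ := ⇑(v : EuclideanSpace ℝ (Fin 4)) with hxdef
  have hbb : ∀ s t : Fin 4, dotProduct (⇑(b s)) (⇑(b t)) = if s = t then 1 else 0 := by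
    intro s t
    have h := orthonormal_iff_ite.mp b.orthonormal s t
    rw [EuclideanSpace.inner_eq_star_dotProduct] at h
    simpa [dotProduct_comm] using h
  have hxP : x = a 0 • ⇑(b i) + a 1 • ⇑(b j) := by
    funext k
    have := congrArg (fun (z : EuclideanSpace ℝ (Fin 4)) => z k) ha
    simpa [v2] using this.symm
  have hSbi : S *ᵥ ⇑(b i) = μ i • ⇑(b i) := hSsa.mulVec_eigenvectorBasis i
  have hSbj : S *ᵥ ⇑(b j) = μ j • ⇑(b j) := hSsa.mulVec_eigenvectorBasis j
  have qP : x ⬝ᵥ (S *ᵥ x) ≤ 0 := by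
    rw [hxP, mulVec_add, mulVec_smul, mulVec_smul, hSbi, hSbj]
    simp only [add_dotProduct, dotProduct_add, smul_dotProduct, dotProduct_smul, smul_eq_mul,
      hbb, hij, hij.symm, if_true, if_false]
    nlinarith [sq_nonneg (a 0), sq_nonneg (a 1), mul_nonneg (sq_nonneg (a 0)) (neg_nonneg.mpr hi),
      mul_nonneg (sq_nonneg (a 1)) (neg_nonneg.mpr hj)]
  have hgne : g ≠ 0 := by
    intro h
    rw [h] at hg
    simp at hg
    exact hvne hg.symm
  have hxW : x = L *ᵥ ![g 2, g 0, g 1, -(g 2)] := by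
    rw [← hu g, mulVec_add, mulVec_add, mulVec_smul, mulVec_smul, mulVec_smul]
    funext k
    have := congrArg (fun (z : EuclideanSpace ℝ (Fin 4)) => z k) hg
    simpa [v3] using this.symm
  have hgor : g 0 ≠ 0 ∨ g 1 ≠ 0 ∨ g 2 ≠ 0 := by
    by_contra h
    push_neg at h
    apply hgne
    funext t
    fin_cases t
    · exact h.1
    · exact h.2.1
    · exact h.2.2
  have hval : x ⬝ᵥ (S *ᵥ x) = g 0 ^ 2 + g 1 ^ 2 + 4 * g 2 ^ 2 := by
    rw [hxW, dot_sandwich L S hLsa.eq _, hLSL, prattB_mulVec]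
    simp only [dotProduct, Fin.sum_univ_four]
    simp only [Matrix.cons_val_zero, Matrix.cons_val_one, Matrix.head_cons,
      Matrix.cons_val_two, Matrix.tail_cons, Matrix.cons_val_three]
    ring
  have qW : 0 < x ⬝ᵥ (S *ᵥ x) := by
    rw [hval]
    rcases hgor with h | h | h
    · nlinarith [sq_nonneg (g 1), sq_nonneg (g 2), sq_pos_of_ne_zero h]
    · nlinarith [sq_nonneg (g 0), sq_nonneg (g 2), sq_pos_of_ne_zero h]
    · nlinarith [sq_nonneg (g 0), sq_nonneg (g 1), sq_pos_of_ne_zero h]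
  exact absurd qP (not_le.mpr qW)

/-- For a symmetric positive definite 4×4 matrix `M`, the quartic
polynomial `Q(η) = det(M - ηB)` has four real roots counted with multiplicity,
exactly three of which are positive and one negative. -/
theorem stmt_15 (M : Matrix (Fin 4) (Fin 4) ℝ) (hM : M.PosDef) :
    ∃ (c η₁ η₂ η₃ η₄ : ℝ), c ≠ 0 ∧ η₁ < 0 ∧ 0 < η₂ ∧ 0 < η₃ ∧ 0 < η₄ ∧
      ∀ η : ℝ, (M - η • prattB).det
        = c * (η - η₁) * (η - η₂) * (η - η₃) * (η - η₄) := by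
  classical
  open scoped MatrixOrder in set L := CFC.sqrt M with hLdef
  open scoped MatrixOrder in have hLsa : L.IsHermitian := (CFC.sqrt_nonneg M).posSemidef.isHermitian
  open scoped MatrixOrder in have hLL : L * L = M := CFC.sqrt_mul_sqrt_self M hM.posSemidef.nonneg
  have hMdet : 0 < M.det := hM.det_pos
  have hLdet : L.det ≠ 0 := by
    intro h
    rw [← hLL, det_mul, h, mul_zero] at hMdet
    exact lt_irrefl _ hMdet
  have hLunit : IsUnit L.det := isUnit_iff_ne_zero.mpr hLdet
  have hLinv : L⁻¹ * L = 1 := nonsing_inv_mul L hLunit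
  have hLinv' : L * L⁻¹ = 1 := mul_nonsing_inv L hLunit
  have hLinvsa : (L⁻¹).IsHermitian := hLsa.inv
  set S := L⁻¹ * prattB * L⁻¹ with hSdef
  have hSsa : S.IsHermitian := by
    unfold S
    unfold Matrix.IsHermitian
    rw [conjTranspose_mul, conjTranspose_mul, hLinvsa.eq, prattB_herm.eq]
    rw [mul_assoc]
  have hLSL : L * S * L = prattB := by
    unfold S
    rw [← mul_assoc, ← mul_assoc, hLinv', one_mul, mul_assoc, hLinv, mul_one]
  set μ := hSsa.eigenvalues with hμdef
  have key : ∀ η : ℝ, (M - η • prattB).det = (L.det * L.det) * ∏ i, (1 - η * μ i) :=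
    fun η => det_key L S M prattB hLL hLSL hSsa η
  have hprod : ∏ i, μ i < 0 := prod_eig_neg L hLdet S hSdef hSsa
  have hone : ∀ i j : Fin 4, i ≠ j → μ i ≤ 0 → μ j ≤ 0 → False :=
    fun i j hij hi hj => at_most_one_nonpos L S hLdet hLsa hSsa hLSL i j hij hi hj
  have hnz : ∀ i, μ i ≠ 0 := by
    intro i hi
    rw [← Finset.prod_erase_mul _ _ (Finset.mem_univ i), hi, mul_zero] at hprod
    exact lt_irrefl _ hprod
  have hex : ∃ i₀, μ i₀ < 0 := by
    by_contra h
    push_neg at h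
    have : ∀ i, 0 < μ i := fun i => lt_of_le_of_ne (h i) (Ne.symm (hnz i))
    have := Finset.prod_pos (s := Finset.univ) (f := μ) (fun i _ => this i)
    exact absurd hprod (not_lt.mpr (le_of_lt this))
  obtain ⟨i₀, hi₀⟩ := hex
  have hpos : ∀ j, j ≠ i₀ → 0 < μ j := by
    intro j hj
    by_contra h
    push_neg at h
    exact hone j i₀ hj h (le_of_lt hi₀)
  have hd : L.det * L.det ≠ 0 := mul_ne_zero hLdet hLdet
  obtain ⟨c, η₁, η₂, η₃, η₄, hc, h1, h2, h3, h4, hfac⟩ :=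
    quartic_package μ (L.det * L.det) hd i₀ hi₀ hpos
  exact ⟨c, η₁, η₂, η₃, η₄, hc, h1, h2, h3, h4, fun η => (key η).trans (hfac η)⟩
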